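/- arXiv:2004.03477 — 3 statements merged into one kernel-verified Lean document; each statement's English description precedes it below -/
import Mathlib

section
/- (Proposition 1, completeness direction.) Let reach be the least relation on V × (Σ ∪ N)* × V closed under: (i) reach(x, ε, x) for every vertex x; (ii) reach(x, p, y) whenever p ∈ Σ and (x, p, y) ∈ D; (iii) reach(x, A, y) whenever A ∈ N, (A → α) ∈ P, and reach(x, α, y); (iv) reach(x, α₁α₂, y) whenever there is a vertex w with reach(x, α₁, w) and reach(w, α₂, y). Then for all vertices x, y, every string α over Σ ∪ N, and every terminal string s ∈ Σ*: if α ⇒* s and s ∈ traces(paths(x, y)), then reach(x, α, y). -/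
/-- `HasTrace D x s y` : `s` is the trace of some path in the data graph `D` from `x` to `y`. -/
inductive HasTrace {V E : Type*} (D : Set (V × E × V)) : V → List E → V → Prop
  | nil (x : V) : HasTrace D x [] x
  | cons {x y z : V} {p : E} {s : List E} :
      (x, p, y) ∈ D → HasTrace D y s z → HasTrace D x (p :: s) z


/-- The least relation `reach` of Proposition 1. -/
inductive Reach {T V : Type*} (g : ContextFreeGrammar T) (D : Set (V × T × V)) :
    V → List (Symbol T g.NT) → V → Prop
  | eps (x : V) : Reach g D x [] x
  | term {x y : V} {p : T} : (x, p, y) ∈ D → Reach g D x [Symbol.terminal p] y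
  | nonterm {x y : V} {r : ContextFreeRule T g.NT} :
      r ∈ g.rules → Reach g D x r.output y → Reach g D x [Symbol.nonterminal r.input] y
  | concat {x w y : V} {α₁ α₂ : List (Symbol T g.NT)} :
      Reach g D x α₁ w → Reach g D w α₂ y → Reach g D x (α₁ ++ α₂) y

/-- Length-indexed derivations. -/
def DerivN {T : Type*} (g : ContextFreeGrammar T) :
    ℕ → List (Symbol T g.NT) → List (Symbol T g.NT) → Prop
  | 0, u, v => u = v
  | n + 1, u, v => ∃ w, g.Produces u w ∧ DerivN g n w v

lemma derives_exists_derivN {T : Type*} {g : ContextFreeGrammar T}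
    {u v : List (Symbol T g.NT)} (h : g.Derives u v) : ∃ n, DerivN g n u v := by
  induction h using Relation.ReflTransGen.head_induction_on with
  | refl => exact ⟨0, rfl⟩
  | head hp _ ih => obtain ⟨n, hn⟩ := ih; exact ⟨n + 1, _, hp, hn⟩

lemma rewrites_append {T N : Type*} {r : ContextFreeRule T N} :
    ∀ {α₁ α₂ w : List (Symbol T N)}, r.Rewrites (α₁ ++ α₂) w →
      (∃ β₁, r.Rewrites α₁ β₁ ∧ w = β₁ ++ α₂) ∨ (∃ β₂, r.Rewrites α₂ β₂ ∧ w = α₁ ++ β₂) := by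
  intro α₁
  induction α₁ with
  | nil => intro α₂ w h; exact Or.inr ⟨w, h, rfl⟩
  | cons a α₁' ih =>
    intro α₂ w h
    cases h with
    | head s => exact Or.inl ⟨r.output ++ α₁', ContextFreeRule.Rewrites.head α₁', by simp⟩
    | cons x hrs =>
      rcases ih hrs with ⟨β₁, hb, rfl⟩ | ⟨β₂, hb, rfl⟩
      · exact Or.inl ⟨a :: β₁, hb.cons a, rfl⟩
      · exact Or.inr ⟨β₂, hb, rfl⟩

lemma derivN_append {T : Type*} {g : ContextFreeGrammar T} :
    ∀ {n : ℕ} {α₁ α₂ v : List (Symbol T g.NT)}, DerivN g n (α₁ ++ α₂) v →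
      ∃ n₁ n₂ v₁ v₂, n₁ + n₂ = n ∧ v = v₁ ++ v₂ ∧ DerivN g n₁ α₁ v₁ ∧ DerivN g n₂ α₂ v₂ := by
  intro n
  induction n with
  | zero => intro α₁ α₂ v h; exact ⟨0, 0, α₁, α₂, rfl, h.symm, rfl, rfl⟩
  | succ n ih =>
    rintro α₁ α₂ v ⟨w, ⟨r, hr, hrw⟩, hd⟩
    rcases rewrites_append hrw with ⟨β₁, hb, rfl⟩ | ⟨β₂, hb, rfl⟩
    · obtain ⟨n₁, n₂, v₁, v₂, hn, hv, h1, h2⟩ := ih hd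
      exact ⟨n₁ + 1, n₂, v₁, v₂, by omega, hv, ⟨β₁, ⟨r, hr, hb⟩, h1⟩, h2⟩
    · obtain ⟨n₁, n₂, v₁, v₂, hn, hv, h1, h2⟩ := ih hd
      exact ⟨n₁, n₂ + 1, v₁, v₂, by omega, hv, h1, ⟨β₂, ⟨r, hr, hb⟩, h2⟩⟩

lemma derivN_nil {T : Type*} {g : ContextFreeGrammar T} {n : ℕ} {v : List (Symbol T g.NT)}
    (h : DerivN g n [] v) : v = [] := by
  cases n with
  | zero => exact h.symm
  | succ n => obtain ⟨w, ⟨r, _, hrw⟩, _⟩ := h; cases hrw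

lemma derivN_terminal {T : Type*} {g : ContextFreeGrammar T} {n : ℕ} {t : T}
    {v : List (Symbol T g.NT)} (h : DerivN g n [Symbol.terminal t] v) :
    v = [Symbol.terminal t] := by
  cases n with
  | zero => exact h.symm
  | succ n =>
    obtain ⟨w, ⟨r, _, hrw⟩, _⟩ := h
    cases hrw with
    | cons x hrs => cases hrs

lemma derivN_nonterminal {T : Type*} {g : ContextFreeGrammar T} {n : ℕ} {A : g.NT}
    {s : List T} (h : DerivN g n [Symbol.nonterminal A] (s.map Symbol.terminal)) :
    ∃ r ∈ g.rules, r.input = A ∧ ∃ m, m + 1 = n ∧ DerivN g m r.output (s.map Symbol.terminal) := by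
  cases n with
  | zero => cases s <;> simp [DerivN] at h
  | succ n =>
    obtain ⟨w, ⟨r, hr, hrw⟩, hd⟩ := h
    cases hrw with
    | head s' =>
      refine ⟨r, hr, rfl, n, rfl, ?_⟩
      simpa using hd
    | cons x hrs => cases hrs

lemma hasTrace_append {V E : Type*} {D : Set (V × E × V)} :
    ∀ {s₁ s₂ : List E} {x y : V}, HasTrace D x (s₁ ++ s₂) y →
      ∃ w, HasTrace D x s₁ w ∧ HasTrace D w s₂ y := by
  intro s₁
  induction s₁ with
  | nil => intro s₂ x y h; exact ⟨x, HasTrace.nil x, h⟩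
  | cons p s₁' ih =>
    intro s₂ x y h
    cases h with
    | cons he ht =>
      obtain ⟨w, h1, h2⟩ := ih ht
      exact ⟨w, HasTrace.cons he h1, h2⟩

lemma map_terminal_eq_append {T N : Type*} :
    ∀ {s : List T} {v₁ v₂ : List (Symbol T N)},
      (s.map Symbol.terminal = v₁ ++ v₂) →
      ∃ s₁ s₂, s = s₁ ++ s₂ ∧ v₁ = s₁.map Symbol.terminal ∧ v₂ = s₂.map Symbol.terminal := by
  intro s
  induction s with
  | nil => intro v₁ v₂ h
           simp only [List.map_nil] at h
           obtain ⟨h1, h2⟩ := List.append_eq_nil_iff.mp h.symm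
           exact ⟨[], [], rfl, by simp [h1], by simp [h2]⟩
  | cons t s' ih =>
    intro v₁ v₂ h
    cases v₁ with
    | nil => exact ⟨[], t :: s', rfl, rfl, by simpa using h.symm⟩
    | cons a v₁' =>
      simp only [List.map_cons, List.cons_append, List.cons.injEq] at h
      obtain ⟨s₁, s₂, rfl, rfl, rfl⟩ := ih h.2
      exact ⟨t :: s₁, s₂, rfl, by simp [h.1], rfl⟩

theorem reach_aux {T V : Type*} (g : ContextFreeGrammar T) (D : Set (V × T × V))
    (n : ℕ) (α : List (Symbol T g.NT)) (x y : V) (s : List T)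
    (hd : DerivN g n α (s.map Symbol.terminal)) (ht : HasTrace D x s y) :
    Reach g D x α y := by
  match α with
  | [] =>
    have hv := derivN_nil hd
    have hs : s = [] := by cases s <;> simp_all
    subst hs
    cases ht
    exact Reach.eps x
  | a :: α' =>
    obtain ⟨n₁, n₂, v₁, v₂, hn, hv, h1, h2⟩ := derivN_append (α₁ := [a]) (α₂ := α') hd
    obtain ⟨s₁, s₂, rfl, rfl, rfl⟩ := map_terminal_eq_append hv
    obtain ⟨w, ht1, ht2⟩ := hasTrace_append ht
    have hr2 : Reach g D w α' y := reach_aux g D n₂ α' w y s₂ h2 ht2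
    have hr1 : Reach g D x [a] w := by
      match a with
      | Symbol.terminal t =>
        have : s₁ = [t] := by
          have := derivN_terminal h1
          cases s₁ with
          | nil => simp at this
          | cons u s₁' => cases s₁' <;> simp_all
        subst this
        cases ht1 with
        | cons he ht' =>
          cases ht'
          exact Reach.term he
      | Symbol.nonterminal A =>
        obtain ⟨r, hr, hA, m, hm, hdm⟩ := derivN_nonterminal h1
        subst hA
        exact Reach.nonterm hr (reach_aux g D m r.output x w s₁ hdm ht1)
    exact Reach.concat hr1 hr2
termination_by (n, α.length)
decreasing_by
  · simp_wf
    rcases Nat.lt_or_eq_of_le (show n₂ ≤ n by omega) with h | h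
    · exact Prod.Lex.left _ _ h
    · subst h; exact Prod.Lex.right _ (by simp)
  · simp_wf; exact Prod.Lex.left _ _ (by omega)

theorem reach_complete {T V : Type*} (g : ContextFreeGrammar T) (D : Set (V × T × V)) :
    ∀ (x y : V) (α : List (Symbol T g.NT)) (s : List T),
      g.Derives α (s.map Symbol.terminal) → HasTrace D x s y → Reach g D x α y := by
  intro x y α s hd ht
  obtain ⟨n, hn⟩ := derives_exists_derivN hd
  exact reach_aux g D n α x y s hn ht
end

section
/- (Proposition 1: derivation of traces for paths in the graph.) Let reach be the least relation on V × (Σ ∪ N)* × V closed under: (i) reach(x, ε, x) for every vertex x; (ii) reach(x, p, y) whenever p ∈ Σ and (x, p, y) ∈ D; (iii) reach(x, A, y) whenever A ∈ N, (A → α) ∈ P, and reach(x, α, y); (iv) reach(x, α₁α₂, y) whenever there is a vertex w with reach(x, α₁, w) and reach(w, α₂, y). Then for all vertices x, y and every string α over Σ ∪ N: reach(x, α, y) holds if and only if there exists a terminal string s ∈ Σ* with α ⇒* s and s ∈ traces(paths(x, y)). -/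
lemma HasTrace.append {V E : Type*} {D : Set (V × E × V)} {x y z : V} {s t : List E}
    (h1 : HasTrace D x s y) (h2 : HasTrace D y t z) : HasTrace D x (s ++ t) z := by
  induction h1 with
  | nil => exact h2
  | cons he _ ih => exact .cons he (ih h2)

lemma Reach.split {T V : Type*} {g : ContextFreeGrammar T} {D : Set (V × T × V)}
    {x y : V} {α : List (Symbol T g.NT)} (h : Reach g D x α y) :
    ∀ α₁ α₂, α = α₁ ++ α₂ → ∃ w, Reach g D x α₁ w ∧ Reach g D w α₂ y := by
  induction h with
  | eps x =>
    rintro α₁ α₂ he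
    obtain ⟨rfl, rfl⟩ := List.append_eq_nil_iff.mp he.symm
    exact ⟨x, .eps x, .eps x⟩
  | @term x y p hm =>
    rintro α₁ α₂ he
    match α₁, α₂, he with
    | [], _, rfl => exact ⟨x, .eps x, .term hm⟩
    | [_], α₂, he =>
      obtain ⟨h1, h2⟩ : _ ∧ α₂ = [] := by simpa using he
      subst h2; cases h1
      exact ⟨y, .term hm, .eps y⟩
  | @nonterm x y r hm _ _ =>
    rintro α₁ α₂ he
    match α₁, α₂, he with
    | [], _, rfl => exact ⟨x, .eps x, .nonterm hm ‹_›⟩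
    | [_], α₂, he =>
      obtain ⟨h1, h2⟩ : _ ∧ α₂ = [] := by simpa using he
      subst h2; cases h1
      exact ⟨y, .nonterm hm ‹_›, .eps y⟩
  | @concat x w y β₁ β₂ h1 h2 ih1 ih2 =>
    rintro α₁ α₂ he
    rcases List.append_eq_append_iff.mp he.symm with ⟨c, rfl, rfl⟩ | ⟨c, rfl, rfl⟩
    · obtain ⟨u, hu1, hu2⟩ := ih1 α₁ c rfl
      exact ⟨u, hu1, .concat hu2 h2⟩
    · obtain ⟨u, hu1, hu2⟩ := ih2 c α₂ rfl
      exact ⟨u, .concat h1 hu1, hu2⟩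

lemma Reach.of_trace {T V : Type*} {g : ContextFreeGrammar T} {D : Set (V × T × V)}
    {x y : V} {s : List T} (h : HasTrace D x s y) :
    Reach g D x (s.map Symbol.terminal) y := by
  induction h with
  | nil => exact .eps _
  | cons he _ ih => exact Reach.concat (α₁ := [_]) (.term he) ih

lemma Reach.of_produces {T V : Type*} {g : ContextFreeGrammar T} {D : Set (V × T × V)}
    {x y : V} {α β : List (Symbol T g.NT)} (hp : g.Produces α β)
    (h : Reach g D x β y) : Reach g D x α y := by
  obtain ⟨r, hr, hrw⟩ := hp
  obtain ⟨p, q, rfl, rfl⟩ := hrw.exists_parts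
  obtain ⟨u, hu, h2⟩ := h.split (p ++ r.output) q (by simp)
  obtain ⟨v, hv1, hv2⟩ := hu.split p r.output rfl
  exact .concat (.concat hv1 (.nonterm hr hv2)) h2

theorem reach_iff {T V : Type*} (g : ContextFreeGrammar T) (D : Set (V × T × V)) :
    ∀ (x y : V) (α : List (Symbol T g.NT)),
      Reach g D x α y ↔
        ∃ s : List T, g.Derives α (s.map Symbol.terminal) ∧ HasTrace D x s y := by
  intro x y α
  constructor
  · intro h
    induction h with
    | eps x => exact ⟨[], .refl _, .nil x⟩
    | term hm => exact ⟨[_], .refl _, .cons hm (.nil _)⟩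
    | nonterm hm _ ih =>
      obtain ⟨s, hd, ht⟩ := ih
      exact ⟨s, (ContextFreeGrammar.Produces.single ⟨_, hm, ContextFreeRule.Rewrites.input_output⟩).trans hd, ht⟩
    | concat _ _ ih1 ih2 =>
      obtain ⟨s1, hd1, ht1⟩ := ih1
      obtain ⟨s2, hd2, ht2⟩ := ih2
      refine ⟨s1 ++ s2, ?_, ht1.append ht2⟩
      rw [List.map_append]
      exact (hd1.append_right _).trans (hd2.append_left _)
  · rintro ⟨s, hd, ht⟩
    induction hd using Relation.ReflTransGen.head_induction_on with
    | refl => exact Reach.of_trace ht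
    | head hp _ ih => exact ih.of_produces hp
end

section
/- (Graph augmentation preserves and reflects derivable traces, the invariant behind line 12 of the algorithm.) Let G = (N, Σ ∪ N, P, S) be a context-free grammar whose terminal alphabet is enlarged to Σ ∪ N (each nonterminal A also acting as an edge label), let D ⊆ V × (Σ ∪ N) × V be a data graph, let A ∈ N, and let w, v be vertices such that there exists a terminal string t ∈ Σ* with A ⇒* t and t ∈ traces(paths(w, v)) in D. Let D' = D ∪ {(w, A, v)}. Then for all vertices x, y and every string α over Σ ∪ N: there exists s with α ⇒* s and s a trace of a path from x to y in D' using edges of D together with the new edge (w, A, v) interpreted as an A-derivable step, if and only if there exists s' with α ⇒* s' and s' ∈ traces(paths(x, y)) in D. In particular, adding the edge (w, A, v) to D does not change, for any query pair, the set of vertices reachable by α-derivable paths. -/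
lemma HasTrace.mono {V E : Type*} {D D' : Set (V × E × V)} (hDD : D ⊆ D')
    {x y : V} {s : List E} (h : HasTrace D x s y) : HasTrace D' x s y := by
  induction h with
  | nil x => exact .nil x
  | cons he _ ih => exact .cons (hDD he) ih

theorem augment_preserves_reach {T V : Type*} (g : ContextFreeGrammar T)
    (D : Set (V × Symbol T g.NT × V)) (A : g.NT) (w v : V)
    (h : ∃ t : List T, g.Derives [Symbol.nonterminal A] (t.map Symbol.terminal) ∧
        HasTrace D w (t.map Symbol.terminal) v) :
    ∀ (x y : V) (α : List (Symbol T g.NT)),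
      (∃ s : List (Symbol T g.NT), g.Derives α s ∧
          HasTrace (D ∪ {(w, Symbol.nonterminal A, v)}) x s y) ↔
      (∃ s' : List (Symbol T g.NT), g.Derives α s' ∧ HasTrace D x s' y) := by
  obtain ⟨t, hAt, htr⟩ := h
  intro x y α
  constructor
  · rintro ⟨s, hαs, hs⟩
    suffices key : ∀ {x y : V} {s : List (Symbol T g.NT)},
        HasTrace (D ∪ {(w, Symbol.nonterminal A, v)}) x s y →
        ∃ s', g.Derives s s' ∧ HasTrace D x s' y by
      obtain ⟨s', hss', htr'⟩ := key hs
      exact ⟨s', hαs.trans hss', htr'⟩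
    intro x y s hs
    induction hs with
    | nil x => exact ⟨[], ContextFreeGrammar.Derives.refl _, .nil x⟩
    | @cons a b c p s he _ ih =>
      obtain ⟨s', hss', htr'⟩ := ih
      rcases he with he | he
      · exact ⟨p :: s', by simpa using hss'.append_left [p], .cons he htr'⟩
      · obtain ⟨rfl, rfl, rfl⟩ : a = w ∧ p = Symbol.nonterminal A ∧ b = v := by
          simpa [Prod.ext_iff] using he
        refine ⟨t.map Symbol.terminal ++ s', ?_, htr.append htr'⟩
        have h1 := hss'.append_left ([Symbol.nonterminal A] : List (Symbol T g.NT))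
        have h2 := hAt.append_right s'
        simpa using h1.trans h2
  · rintro ⟨s', hαs', htr'⟩
    exact ⟨s', hαs', htr'.mono Set.subset_union_left⟩
end
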